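/- Fix an integer k ≥ 1 and a real parameter d with d ∉ {2, 4, …, 4k}. With c_j = ∏_{ℓ=1}^k (d − 2j − 2ℓ) / ∏_{1 ≤ ℓ ≤ k, ℓ ≠ j} (2ℓ − 2j), one has ∑_{j=1}^k c_j/(2j) + 1 = ∏_{ℓ=1}^k (d − 2ℓ)/(2ℓ). -/

import Mathlib

open Finset Polynomial

lemma coeff_card_sub_one_eq_sum {F : Type*} [Field F] {ι : Type*} [DecidableEq ι]
    {s : Finset ι} {v : ι → F} (hvs : Set.InjOn v s) {f : F[X]}
    (hf : f.degree < s.card) :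
    f.coeff (s.card - 1) = ∑ i ∈ s, f.eval (v i) * Lagrange.nodalWeight s v i := by
  nontriviality F
  conv_lhs => rw [Lagrange.eq_interpolate hvs hf, Lagrange.interpolate_apply,
    Polynomial.finset_sum_coeff]
  refine sum_congr rfl fun i hi => ?_
  rw [Lagrange.basis_eq_prod_sub_inv_mul_nodal_div hi, ← Lagrange.nodal_erase_eq_nodal_div hi,
    ← mul_assoc, ← Polynomial.C_mul, Polynomial.coeff_C_mul]
  have h1 : (Lagrange.nodal (s.erase i) v).coeff (s.card - 1) = 1 := by
    have := Lagrange.natDegree_nodal (R := F) (s := s.erase i) (v := v)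
    rw [← Finset.card_erase_of_mem hi, ← this]
    exact Lagrange.nodal_monic.coeff_natDegree
  rw [h1, mul_one, mul_comm]

theorem cauchy_coeff_sum_prod (k : ℕ) (hk : 1 ≤ k) (d : ℝ)
    (hd : ∀ l ∈ Finset.Icc 1 (2 * k), d ≠ 2 * (l : ℝ)) :
    (∑ j ∈ Finset.Icc 1 k,
        ((∏ l ∈ Finset.Icc 1 k, (d - 2 * j - 2 * l)) /
            (∏ l ∈ (Finset.Icc 1 k).erase j, ((2 * l : ℝ) - 2 * j))) / (2 * (j : ℝ))) + 1
      = ∏ l ∈ Finset.Icc 1 k, (d - 2 * l) / (2 * (l : ℝ)) := by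
  obtain ⟨m, rfl⟩ : ∃ m, k = m + 1 := ⟨k - 1, by omega⟩
  set k := m + 1 with hkdef
  clear hd hk
  set v : ℕ → ℝ := fun i => 2 * (i : ℝ) with hv
  set s : Finset ℕ := Finset.Icc 0 k with hs
  have hvs : Set.InjOn v s := by
    intro a _ b _ h
    have : (a : ℝ) = b := by simpa [hv] using h
    exact_mod_cast this
  set f : ℝ[X] := ∏ l ∈ Finset.Icc 1 k, (C (d - 2 * l) - X) with hf
  have hcard : s.card = k + 1 := by simp [hs]
  have hcard1 : (Finset.Icc 1 k).card = k := by simp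
  -- f = C ((-1)^k) * nodal
  have hfnodal : f = C ((-1 : ℝ)^k) * Lagrange.nodal (Finset.Icc 1 k) (fun l => d - 2 * l) := by
    rw [hf, Lagrange.nodal,
      show (C ((-1:ℝ)^k)) = ∏ _i ∈ Finset.Icc 1 k, (C (-1:ℝ)) from by
        rw [Finset.prod_const, hcard1, ← map_pow],
      ← Finset.prod_mul_distrib]
    refine Finset.prod_congr rfl fun l _ => ?_
    simp only [map_neg, map_one]
    ring
  have hdeg : f.degree < s.card := by
    rw [hfnodal, hcard]
    calc (C ((-1:ℝ)^k) * Lagrange.nodal (Finset.Icc 1 k) (fun l => d - 2 * l)).degree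
        ≤ (C ((-1:ℝ)^k)).degree + (Lagrange.nodal (Finset.Icc 1 k) (fun l => d - 2 * l)).degree :=
          Polynomial.degree_mul_le _ _
      _ ≤ 0 + (k : WithBot ℕ) := by
          gcongr
          · exact Polynomial.degree_C_le
          · rw [Lagrange.degree_nodal, hcard1]
      _ < (k + 1 : ℕ) := by
          rw [zero_add]
          exact_mod_cast Nat.lt_succ_self k
  have hcoeff : f.coeff k = (-1 : ℝ)^k := by
    rw [hfnodal, Polynomial.coeff_C_mul]
    have h1 : (Lagrange.nodal (Finset.Icc 1 k) (fun l => d - 2 * l)).coeff k = 1 := by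
      have hnd : (Lagrange.nodal (Finset.Icc 1 k) fun l => (d - 2 * l : ℝ)).natDegree = k := by
        rw [Lagrange.natDegree_nodal, hcard1]
      have h2 := (Lagrange.nodal_monic (s := Finset.Icc 1 k)
        (v := fun l => (d - 2 * l : ℝ))).coeff_natDegree
      rwa [hnd] at h2
    rw [h1, mul_one]
  have heval : ∀ x : ℝ, f.eval x = ∏ l ∈ Finset.Icc 1 k, (d - 2 * l - x) := by
    intro x; rw [hf]; simp [Polynomial.eval_prod]
  have E := coeff_card_sub_one_eq_sum hvs hdeg
  rw [hcard, Nat.add_sub_cancel, hcoeff] at E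
  have hsplit : s = insert 0 (Finset.Icc 1 k) := by
    ext x; simp [hs]; omega
  have h0notin : 0 ∉ Finset.Icc 1 k := by simp
  have herase0 : s.erase 0 = Finset.Icc 1 k := by
    ext x; simp [hs]; omega
  have hterm0 : f.eval (v 0) * Lagrange.nodalWeight s v 0
      = (-1:ℝ)^k * ∏ l ∈ Finset.Icc 1 k, (d - 2 * l) / (2 * (l : ℝ)) := by
    rw [heval, Lagrange.nodalWeight, herase0,
      show ((-1:ℝ)^k) = ∏ _l ∈ Finset.Icc 1 k, (-1:ℝ) from by rw [Finset.prod_const, hcard1],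
      ← Finset.prod_mul_distrib, ← Finset.prod_mul_distrib]
    refine Finset.prod_congr rfl fun l hl => ?_
    have hl1 : 1 ≤ l := (Finset.mem_Icc.mp hl).1
    have hlR : (0:ℝ) < (l:ℝ) := by exact_mod_cast hl1
    have hne : (2 * (l:ℝ)) ≠ 0 := by positivity
    have hl0 : (l:ℝ) ≠ 0 := ne_of_gt hlR
    simp only [hv, Nat.cast_zero]
    field_simp
    ring
  have hterm : ∀ j ∈ Finset.Icc 1 k, f.eval (v j) * Lagrange.nodalWeight s v j
      = (-1:ℝ)^m * (((∏ l ∈ Finset.Icc 1 k, (d - 2 * j - 2 * l)) /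
          (∏ l ∈ (Finset.Icc 1 k).erase j, ((2 * l : ℝ) - 2 * j))) / (2 * (j:ℝ))) := by
    intro j hj
    have hj1 : 1 ≤ j := (Finset.mem_Icc.mp hj).1
    have hjk : j ≤ k := (Finset.mem_Icc.mp hj).2
    have herasej : s.erase j = insert 0 ((Finset.Icc 1 k).erase j) := by
      ext x; simp [hs]; omega
    have h0T : 0 ∉ (Finset.Icc 1 k).erase j := by simp
    have hcardT : ((Finset.Icc 1 k).erase j).card = m := by
      rw [Finset.card_erase_of_mem hj, hcard1]
      omega
    rw [heval, Lagrange.nodalWeight, herasej, Finset.prod_insert h0T]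
    have hN : (∏ l ∈ Finset.Icc 1 k, (d - 2 * l - v j))
        = ∏ l ∈ Finset.Icc 1 k, (d - 2 * j - 2 * l) := by
      refine Finset.prod_congr rfl fun l _ => ?_
      simp only [hv]; ring
    have hW : (∏ l ∈ (Finset.Icc 1 k).erase j, (v j - v l)⁻¹)
        = (-1:ℝ)^m * (∏ l ∈ (Finset.Icc 1 k).erase j, ((2 * l : ℝ) - 2 * j))⁻¹ := by
      calc (∏ l ∈ (Finset.Icc 1 k).erase j, (v j - v l)⁻¹)
          = ∏ l ∈ (Finset.Icc 1 k).erase j, ((-1:ℝ) * ((2 * l : ℝ) - 2 * j)⁻¹) := by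
            refine Finset.prod_congr rfl fun l _ => ?_
            simp only [hv]
            rw [show (2*(j:ℝ) - 2*(l:ℝ)) = -((2*(l:ℝ)) - 2*j) by ring, inv_neg]
            ring
        _ = (-1:ℝ)^m * (∏ l ∈ (Finset.Icc 1 k).erase j, ((2 * l : ℝ) - 2 * j))⁻¹ := by
            rw [Finset.prod_mul_distrib, Finset.prod_const, hcardT, Finset.prod_inv_distrib]
    have hv0 : v j - v 0 = 2*(j:ℝ) := by simp [hv]
    rw [hN, hW, hv0, div_eq_mul_inv, div_eq_mul_inv]
    ring
  have h0s : (0:ℕ) ∈ s := by simp [hs]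
  rw [← Finset.add_sum_erase _ _ h0s, herase0, hterm0, Finset.sum_congr rfl hterm,
    ← Finset.mul_sum] at E
  have ha : ((-1:ℝ))^m * (-1)^m = 1 := by
    rw [← pow_add]; exact Even.neg_one_pow ⟨m, rfl⟩
  set P := ∏ l ∈ Finset.Icc 1 k, (d - 2 * l) / (2 * (l : ℝ)) with hP
  set S := ∑ j ∈ Finset.Icc 1 k,
      ((∏ l ∈ Finset.Icc 1 k, (d - 2 * j - 2 * l)) /
          (∏ l ∈ (Finset.Icc 1 k).erase j, ((2 * l : ℝ) - 2 * j))) / (2 * (j : ℝ)) with hS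
  have hk' : (-1:ℝ)^k = -((-1:ℝ)^m) := by rw [hkdef, pow_succ]; ring
  rw [hk'] at E
  linear_combination (-(-1:ℝ)^m) * E + (P - S - 1) * ha
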